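/- For all x ∈ M, ‖Log_𝟙(x)‖₂ ≤ (π/2)·√(1 + x₂² + x₃²), where Log_𝟙(x) = (1/sinc(φ(x)))[x₁,x₂,x₃]ᵀ with φ(x) ∈ (-π/2, π/2]. -/

import Mathlib

open Real

/-- Four-quadrant arctangent: `arctan2 y x ∈ (-π, π]` is the argument of `x + y i`. -/
noncomputable def arctan2 (y x : ℝ) : ℝ := Complex.arg (Complex.mk x y)

/-- The angle-wrapping function mapping into `(-π/2, π/2]`. -/
noncomputable def wrap (α : ℝ) : ℝ :=
  if α ≤ -(π / 2) then α + π
  else if α > π / 2 then α - π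
  else α

/-- `sinc t = sin t / t`, with `sinc 0 = 1`. -/
noncomputable def sinc (t : ℝ) : ℝ := if t = 0 then 1 else Real.sin t / t

/-- The rotation half-angle of a PUDQ. -/
noncomputable def phi (x : Fin 4 → ℝ) : ℝ := wrap (arctan2 (x 1) (x 0))

/-- The logarithm map at the identity, `Log_𝟙 : M → ℝ³`. -/
noncomputable def Log1 (x : Fin 4 → ℝ) : Fin 3 → ℝ :=
  fun i => (1 / _root_.sinc (phi x)) * ![x 1, x 2, x 3] i

lemma abs_phi_le (x : Fin 4 → ℝ) : |phi x| ≤ π / 2 := by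
  have h1 : -π < arctan2 (x 1) (x 0) := Complex.neg_pi_lt_arg _
  have h2 : arctan2 (x 1) (x 0) ≤ π := Complex.arg_le_pi _
  unfold phi wrap
  set α := arctan2 (x 1) (x 0)
  rw [abs_le]
  split_ifs with ha hb
  · constructor <;> linarith
  · constructor <;> linarith
  · push_neg at ha hb; constructor <;> linarith

lemma sinc_ge (t : ℝ) (ht : |t| ≤ π / 2) : 2 / π ≤ _root_.sinc t := by
  unfold _root_.sinc
  split_ifs with h
  · have := Real.pi_gt_three
    rw [div_le_one Real.pi_pos]; linarith
  · rcases lt_or_gt_of_ne h with hneg | hpos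
    · have h1 : 0 ≤ -t := by linarith
      have h2 : -t ≤ π / 2 := by rw [abs_of_neg hneg] at ht; exact ht
      have := Real.mul_le_sin h1 h2
      rw [Real.sin_neg] at this
      rw [show Real.sin t / t = -Real.sin t / -t by ring]
      rw [le_div_iff₀ (by linarith : (0:ℝ) < -t)]
      linarith
    · have h2 : t ≤ π / 2 := by rw [abs_of_pos hpos] at ht; exact ht
      have := Real.mul_le_sin hpos.le h2
      rw [le_div_iff₀ hpos]; linarith

theorem norm_log_le (x : Fin 4 → ℝ) (hx : x 0 ^ 2 + x 1 ^ 2 = 1) :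
    Real.sqrt (∑ i, Log1 x i ^ 2) ≤ (π / 2) * Real.sqrt (1 + x 2 ^ 2 + x 3 ^ 2) := by
  have hpi : (0:ℝ) < π := Real.pi_pos
  have hs : 2 / π ≤ _root_.sinc (phi x) := sinc_ge _ (abs_phi_le x)
  have hspos : 0 < _root_.sinc (phi x) := lt_of_lt_of_le (by positivity) hs
  set c := 1 / _root_.sinc (phi x) with hc
  have hcpos : 0 < c := by positivity
  have hcle : c ≤ π / 2 := by
    rw [hc, div_le_iff₀ hspos]
    calc (1:ℝ) = π / 2 * (2 / π) := by field_simp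
      _ ≤ π / 2 * _root_.sinc (phi x) := by
          exact mul_le_mul_of_nonneg_left hs (by positivity)
  have hx1 : x 1 ^ 2 ≤ 1 := by nlinarith [sq_nonneg (x 0)]
  have hsum : ∑ i, Log1 x i ^ 2 = c ^ 2 * (x 1 ^ 2 + x 2 ^ 2 + x 3 ^ 2) := by
    simp [Log1, Fin.sum_univ_three]
    ring
  rw [hsum]
  have hrhs : (π / 2) * Real.sqrt (1 + x 2 ^ 2 + x 3 ^ 2)
      = Real.sqrt ((π / 2) ^ 2 * (1 + x 2 ^ 2 + x 3 ^ 2)) := by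
    rw [Real.sqrt_mul (by positivity), Real.sqrt_sq (by positivity)]
  rw [hrhs]
  apply Real.sqrt_le_sqrt
  have hc2 : c ^ 2 ≤ (π / 2) ^ 2 := by nlinarith
  have h1 : 0 ≤ ((π / 2) ^ 2 - c ^ 2) * (x 2 ^ 2 + x 3 ^ 2) :=
    mul_nonneg (by linarith) (by positivity)
  have h2 : 0 ≤ c ^ 2 * (1 - x 1 ^ 2) := mul_nonneg (sq_nonneg c) (by linarith)
  nlinarith [h1, h2]
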